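/- Let G be a finite group, p a prime, M a normal subgroup of G, P a Sylow p-subgroup of G, and set Q = P ∩ M. If X is a subgroup with Q ≤ X ≤ P, then N_M(P) ≤ N_M(X); that is, every element of M that normalizes P also normalizes X. -/

import Mathlib

open Subgroup

/-- Lemma: if `M ⊴ G`, `P` is a Sylow `p`-subgroup, `Q = P ∩ M`, and `X` is a subgroup
with `Q ≤ X ≤ P`, then every element of `M` normalizing `P` also normalizes `X`,
i.e. `N_M(P) ≤ N_M(X)`. -/
theorem normalizer_inter_le {G : Type*} [Group G] [Fintype G]
    (p : ℕ) (hp : p.Prime) (M : Subgroup G) (hM : M.Normal) (P : Sylow p G)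
    (X : Subgroup G) (hQX : (P : Subgroup G) ⊓ M ≤ X) (hXP : X ≤ (P : Subgroup G)) :
    ∀ g ∈ M, g ∈ normalizer ((P : Subgroup G) : Set G) → g ∈ normalizer (X : Set G) := by
  have key : ∀ g ∈ M, g ∈ normalizer ((P : Subgroup G) : Set G) → ∀ x ∈ X, g * x * g⁻¹ ∈ X := by
    intro g hgM hgP x hx
    have h1 : g * x * g⁻¹ ∈ (P : Subgroup G) :=
      (Subgroup.mem_normalizer_iff.mp hgP x).mp (hXP hx)
    have h2 : x⁻¹ * (g * x * g⁻¹) ∈ M := by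
      have hxg : x⁻¹ * g * x ∈ M := by
        have := hM.conj_mem g hgM x⁻¹
        simpa [mul_assoc] using this
      have : (x⁻¹ * g * x) * g⁻¹ ∈ M := M.mul_mem hxg (M.inv_mem hgM)
      simpa [mul_assoc] using this
    have h3 : x⁻¹ * (g * x * g⁻¹) ∈ (P : Subgroup G) :=
      Subgroup.mul_mem _ (Subgroup.inv_mem _ (hXP hx)) h1
    have h4 : x⁻¹ * (g * x * g⁻¹) ∈ X := hQX ⟨h3, h2⟩
    have := X.mul_mem hx h4
    simpa [mul_assoc] using this
  intro g hgM hgP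
  rw [Subgroup.mem_normalizer_iff]
  intro h
  constructor
  · intro hh
    exact key g hgM hgP h hh
  · intro hh
    have := key g⁻¹ (M.inv_mem hgM) ((normalizer ((P : Subgroup G) : Set G)).inv_mem hgP) _ hh
    simpa [mul_assoc] using this
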